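/- Let G be an F_k-free graph with vertex set partitioned as X ∪ Y, and suppose every edge of G[X] has at least |Y| − β common neighbors in Y, where |Y| > kβ + k(β+1). Then the matching number of G[X] is at most k−1 and the maximum degree of G[X] is at most k−1. -/

import Mathlib

open SimpleGraph

/-- The matching number of `G` restricted to a vertex subset `S`. -/
noncomputable def nuOn {V : Type*} (G : SimpleGraph V) (S : Set V) : ℕ :=
  sSup {n | ∃ M : G.Subgraph, M.IsMatching ∧ M.verts ⊆ S ∧ M.edgeSet.ncard = n}

/-- The matching number `ν(G)`. -/
noncomputable def nu {V : Type*} (G : SimpleGraph V) : ℕ := nuOn G Set.univ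

/-- The friendship graph `F_k`: `k` triangles sharing the common center `none`. -/
def friendshipGraph (k : ℕ) : SimpleGraph (Option (Fin k × Fin 2)) :=
  SimpleGraph.fromRel (fun a b => a = none ∨ b = none ∨ ∃ i, a = some (i, 0) ∧ b = some (i, 1))

/-- `G` contains no copy of the friendship graph `F_k`. -/
def FkFree (k : ℕ) {V : Type*} (G : SimpleGraph V) : Prop :=
  ∀ f : friendshipGraph k →g G, ¬ Function.Injective ⇑f

/-- Auxiliary: an explicit `F_k` in `G` contradicts `F_k`-freeness. -/
lemma not_fkfree_aux {V : Type*} {k : ℕ} (G : SimpleGraph V) (c : V) (a b : Fin k → V)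
    (hca : ∀ i, G.Adj c (a i)) (hcb : ∀ i, G.Adj c (b i)) (hab : ∀ i, G.Adj (a i) (b i))
    (ha : Function.Injective a) (hb : Function.Injective b)
    (hab' : ∀ i j, a i ≠ b j) : ¬ FkFree k G := by
  intro hfree
  let f : Option (Fin k × Fin 2) → V :=
    fun o => o.elim c (fun p => if p.2 = 0 then a p.1 else b p.1)
  have key : ∀ u v : Option (Fin k × Fin 2),
      (u = none ∨ v = none ∨ ∃ i, u = some (i, 0) ∧ v = some (i, 1)) → u ≠ v →
      G.Adj (f u) (f v) := by
    rintro u v (rfl | rfl | ⟨i, rfl, rfl⟩) huv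
    · cases v with
      | none => exact absurd rfl huv
      | some p =>
        obtain ⟨i, j⟩ := p
        show G.Adj c (if j = 0 then a i else b i)
        fin_cases j
        · simpa using hca i
        · simpa using hcb i
    · cases u with
      | none => exact absurd rfl huv
      | some p =>
        obtain ⟨i, j⟩ := p
        show G.Adj (if j = 0 then a i else b i) c
        fin_cases j
        · simpa using (hca i).symm
        · simpa using (hcb i).symm
    · show G.Adj (if (0 : Fin 2) = 0 then a i else b i) (if (1 : Fin 2) = 0 then a i else b i)
      simpa using hab i
  have fin2 : ∀ j : Fin 2, j ≠ 0 → j = 1 := by decide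
  have hmap : ∀ {u v}, (friendshipGraph k).Adj u v → G.Adj (f u) (f v) := by
    intro u v h
    rw [friendshipGraph, SimpleGraph.fromRel_adj] at h
    obtain ⟨hne, h | h⟩ := h
    · exact key u v h hne
    · exact (key v u h hne.symm).symm
  have hinj : Function.Injective f := by
    intro u v huv'
    cases u with
    | none =>
      cases v with
      | none => rfl
      | some p =>
        obtain ⟨i, j⟩ := p
        exfalso
        have hth : c = if j = 0 then a i else b i := huv'
        by_cases hj : j = 0
        · rw [if_pos hj] at hth; exact (hca i).ne hth
        · rw [if_neg hj] at hth; exact (hcb i).ne hth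
    | some p =>
      obtain ⟨i, j⟩ := p
      cases v with
      | none =>
        exfalso
        have hth : (if j = 0 then a i else b i) = c := huv'
        by_cases hj : j = 0
        · rw [if_pos hj] at hth; exact (hca i).ne hth.symm
        · rw [if_neg hj] at hth; exact (hcb i).ne hth.symm
      | some q =>
        obtain ⟨i', j'⟩ := q
        have hth : (if j = 0 then a i else b i) = if j' = 0 then a i' else b i' := huv'
        by_cases hj : j = 0 <;> by_cases hj' : j' = 0
        · rw [if_pos hj, if_pos hj'] at hth
          rw [ha hth, hj, hj']
        · rw [if_pos hj, if_neg hj'] at hth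
          exact absurd hth (hab' i i')
        · rw [if_neg hj, if_pos hj'] at hth
          exact absurd hth.symm (hab' i' i)
        · rw [if_neg hj, if_neg hj'] at hth
          rw [hb hth, fin2 j hj, fin2 j' hj']
  exact hfree ⟨f, hmap⟩ hinj

/-- Auxiliary: a finite set of cardinality at least `k` admits an injection from `Fin k`. -/
lemma exists_inj_of_le_ncard {V : Type*} {k : ℕ} {s : Set V} (hs : s.Finite)
    (h : k ≤ s.ncard) : ∃ f : Fin k → V, Function.Injective f ∧ ∀ i, f i ∈ s := by
  classical
  obtain ⟨t, hts, htc⟩ := Set.exists_subset_card_eq h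
  have htf : t.Finite := hs.subset hts
  haveI := htf.fintype
  have hcard : Fintype.card ↑t = k := by
    rw [← Set.toFinset_card, ← Set.ncard_eq_toFinset_card' t]
    exact htc
  obtain ⟨e⟩ := Fintype.card_eq.mp (hcard.trans (Fintype.card_fin k).symm)
  exact ⟨fun i => (e.symm i : V), fun i j hij => by
    simpa using e.symm.injective (Subtype.ext hij), fun i => hts (e.symm i).2⟩

lemma ncard_biUnion_le_sum {ι V : Type*} [Fintype V] (s : Finset ι) (f : ι → Set V) :
    (⋃ i ∈ s, f i).ncard ≤ ∑ i ∈ s, (f i).ncard := by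
  classical
  induction s using Finset.induction with
  | empty => simp
  | insert a s' h ih =>
    rw [Finset.set_biUnion_insert, Finset.sum_insert h]
    exact (Set.ncard_union_le _ _).trans (by omega)

theorem heavy_edges_structure {V : Type*} [Fintype V] (k β : ℕ) (hk : 1 ≤ k)
    (G : SimpleGraph V) (X Y : Set V)
    (hpart : X ∪ Y = Set.univ) (hdisj : Disjoint X Y) (hfree : FkFree k G)
    (hcn : ∀ x x', x ∈ X → x' ∈ X → G.Adj x x' →
      Y.ncard - β ≤ ((G.neighborSet x ∩ G.neighborSet x') ∩ Y).ncard)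
    (hY : k * β + k * (β + 1) < Y.ncard) :
    nuOn G X ≤ k - 1 ∧ ∀ x ∈ X, (G.neighborSet x ∩ X).ncard ≤ k - 1 := by
  classical
  have hβk : β ≤ k * β := Nat.le_mul_of_pos_left β hk
  have hkk : k ≤ k * (β + 1) := by
    calc k = k * 1 := (mul_one k).symm
    _ ≤ k * (β + 1) := Nat.mul_le_mul_left k (by omega)
  constructor
  · -- matching number bound
    apply csSup_le
    · exact ⟨0, ⊥, fun v hv => by simp [SimpleGraph.Subgraph.verts_bot] at hv,
        by simp, by simp⟩
    rintro n ⟨M, hM, hMX, hMn⟩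
    by_contra hn
    have hkn : k ≤ n := by omega
    obtain ⟨e, he_inj, he_mem⟩ :=
      exists_inj_of_le_ncard (Set.toFinite M.edgeSet) (hMn ▸ hkn)
    have hend : ∀ i, ∃ p : V × V, e i = s(p.1, p.2) ∧ M.Adj p.1 p.2 := by
      intro i
      obtain ⟨⟨x, y⟩, hxy⟩ := Quot.exists_rep (e i)
      refine ⟨(x, y), hxy.symm, ?_⟩
      exact SimpleGraph.Subgraph.mem_edgeSet.mp (by rw [show s(x,y) = e i from hxy]; exact he_mem i)
    choose p hp1 hp2 using hend
    set a : Fin k → V := fun i => (p i).1 with ha_def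
    set b : Fin k → V := fun i => (p i).2 with hb_def
    have hp1' : ∀ i, e i = s(a i, b i) := hp1
    have hp2' : ∀ i, M.Adj (a i) (b i) := hp2
    have huniq : ∀ {u v w : V}, M.Adj u v → M.Adj u w → v = w := by
      intro u v w h1 h2
      exact (hM (M.edge_vert h1)).unique h1 h2
    have haX : ∀ i, a i ∈ X := fun i => hMX (M.edge_vert (hp2' i))
    have hbX : ∀ i, b i ∈ X := fun i => hMX (M.edge_vert (hp2' i).symm)
    have hGab : ∀ i, G.Adj (a i) (b i) := fun i => M.adj_sub (hp2' i)
    have ha : Function.Injective a := by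
      intro i j hij
      apply he_inj
      have : M.Adj (a i) (b j) := by rw [hij]; exact hp2' j
      have hbij : b i = b j := huniq (hp2' i) this
      rw [hp1' i, hp1' j, ← hij, ← hbij]
    have hb : Function.Injective b := by
      intro i j hij
      apply he_inj
      have : M.Adj (b i) (a j) := by rw [hij]; exact (hp2' j).symm
      have haij : a i = a j := huniq (hp2' i).symm this
      rw [hp1' i, hp1' j, ← hij, ← haij]
    have hab' : ∀ i j, a i ≠ b j := by
      intro i j hij
      have h1 : M.Adj (b j) (b i) := by rw [← hij]; exact hp2' i
      have h2 : b i = a j := huniq h1 (hp2' j).symm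
      have : e i = e j := by rw [hp1' i, hp1' j, hij, h2]; exact Sym2.eq_swap
      have hijeq : i = j := he_inj this
      subst hijeq
      exact (hGab i).ne hij
    -- find a common neighbor y of all matching edges in Y
    set Bad : Fin k → Set V :=
      fun i => Y \ ((G.neighborSet (a i) ∩ G.neighborSet (b i)) ∩ Y) with hBad_def
    have hBad : ∀ i, (Bad i).ncard ≤ β := by
      intro i
      have hcni := hcn (a i) (b i) (haX i) (hbX i) (hGab i)
      have hsub : (G.neighborSet (a i) ∩ G.neighborSet (b i)) ∩ Y ⊆ Y :=
        Set.inter_subset_right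
      have hdc := Set.ncard_diff hsub (Set.toFinite _)
      show (Y \ ((G.neighborSet (a i) ∩ G.neighborSet (b i)) ∩ Y)).ncard ≤ β
      omega
    have hU : (⋃ i ∈ Finset.univ, Bad i).ncard ≤ k * β := by
      refine (ncard_biUnion_le_sum Finset.univ Bad).trans ?_
      calc ∑ i ∈ Finset.univ, (Bad i).ncard ≤ ∑ _i ∈ (Finset.univ : Finset (Fin k)), β :=
        Finset.sum_le_sum (fun i _ => hBad i)
      _ = k * β := by simp [mul_comm]
    obtain ⟨y, hyY, hyU⟩ : ∃ y ∈ Y, y ∉ ⋃ i ∈ Finset.univ, Bad i := by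
      by_contra hcon
      push_neg at hcon
      have : Y.ncard ≤ (⋃ i ∈ Finset.univ, Bad i).ncard :=
        Set.ncard_le_ncard hcon (Set.toFinite _)
      omega
    have hy : ∀ i, G.Adj y (a i) ∧ G.Adj y (b i) := by
      intro i
      have hnb : y ∉ Bad i := fun hmem => hyU (Set.mem_biUnion (Finset.mem_univ i) hmem)
      have hyC : y ∈ (G.neighborSet (a i) ∩ G.neighborSet (b i)) ∩ Y := by
        by_contra hC
        exact hnb ⟨hyY, hC⟩
      exact ⟨hyC.1.1.symm, hyC.1.2.symm⟩
    exact not_fkfree_aux G y a b (fun i => (hy i).1) (fun i => (hy i).2) hGab ha hb hab' hfree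
  · -- degree bound
    intro x hx
    by_contra hdeg
    have hk' : k ≤ (G.neighborSet x ∩ X).ncard := by omega
    obtain ⟨xi, hxi_inj, hxi_mem⟩ := exists_inj_of_le_ncard (Set.toFinite _) hk'
    have hadjx : ∀ i, G.Adj x (xi i) := fun i => (hxi_mem i).1
    have hxiX : ∀ i, xi i ∈ X := fun i => (hxi_mem i).2
    have hScard : ∀ i, k ≤ ((G.neighborSet x ∩ G.neighborSet (xi i)) ∩ Y).ncard := by
      intro i
      have := hcn x (xi i) hx (hxiX i) (hadjx i)
      omega
    -- Hall's theorem to pick distinct common neighbors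
    set t : Fin k → Finset V :=
      fun i => ((G.neighborSet x ∩ G.neighborSet (xi i)) ∩ Y).toFinite.toFinset with ht_def
    have htcard : ∀ i, k ≤ (t i).card := by
      intro i
      have h := hScard i
      rwa [Set.ncard_eq_toFinset_card _ (Set.toFinite _)] at h
    obtain ⟨y, hy_inj, hy_mem⟩ :=
      (Finset.all_card_le_biUnion_card_iff_exists_injective t).mp (by
        intro s
        rcases s.eq_empty_or_nonempty with rfl | ⟨i, hi⟩
        · simp
        · calc s.card ≤ (Finset.univ : Finset (Fin k)).card := Finset.card_le_univ s
          _ = k := by simp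
          _ ≤ (t i).card := htcard i
          _ ≤ (s.biUnion t).card :=
            Finset.card_le_card (Finset.subset_biUnion_of_mem t hi))
    have hyS : ∀ i, y i ∈ (G.neighborSet x ∩ G.neighborSet (xi i)) ∩ Y := by
      intro i
      have hme := hy_mem i
      rw [ht_def] at hme
      simpa [Set.Finite.mem_toFinset, and_assoc] using hme
    have hyY : ∀ i, y i ∈ Y := fun i => (hyS i).2
    have hab' : ∀ i j, xi i ≠ y j := by
      intro i j hij
      exact Set.disjoint_left.mp hdisj (hxiX i) (hij ▸ hyY j)
    exact not_fkfree_aux G x xi y hadjx (fun i => (hyS i).1.1)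
      (fun i => (hyS i).1.2) hxi_inj hy_inj hab' hfree
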